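/- (Gowers–Cauchy–Schwarz inequality for the Gowers uniformity norms.) Let Z be a finite additive group, let s ≥ 2 be an integer, and let ⟨f_ω : ω ∈ {0,1}^s⟩ be a family of real-valued functions on Z. Then |𝔼[∏_{ω∈{0,1}^s} f_ω(x + ω·h) | x ∈ Z, h ∈ Z^s]| ≤ ∏_{ω∈{0,1}^s} ‖f_ω‖_{U^s(Z)}. -/
import Mathlib


open Finset

/-- The average of a real-valued function on a finite type. -/
noncomputable def avg (α : Type*) [Fintype α] (f : α → ℝ) : ℝ :=
  (∑ x, f x) / (Fintype.card α : ℝ)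

/-- The Gowers uniformity norm `‖f‖_{U^s(Z)}` of `f : Z → ℝ`. -/
noncomputable def gowersNorm (Z : Type*) [AddCommGroup Z] [Fintype Z] (s : ℕ) (f : Z → ℝ) : ℝ :=
  (avg (Z × (Fin s → Z)) fun xh =>
      ∏ ω : Fin s → Bool, f (xh.1 + ∑ i, if ω i then xh.2 i else 0)) ^ (((2 : ℝ) ^ s)⁻¹)

/-- The weak uniformity norm `‖f‖_{w^s(Z)}` of `f : Z → ℝ`. -/
noncomputable def weakNorm (Z : Type*) [AddCommGroup Z] [Fintype Z] (s : ℕ) (f : Z → ℝ) : ℝ :=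
  sSup {r : ℝ | ∃ h : (Fin s → Bool) → Z → ℝ,
    (∀ ω x, h ω x ∈ Set.Icc (-1 : ℝ) 1) ∧
    r = avg (Z × (Fin s → Z)) fun xh =>
      f xh.1 * ∏ ω ∈ Finset.univ.filter (fun ω : Fin s → Bool => ω ≠ fun _ => false),
        h ω (xh.1 + ∑ i, if ω i then xh.2 i else 0)}
set_option linter.unusedSectionVars false

namespace GCS15

variable {Z : Type} [AddCommGroup Z] [Fintype Z] {s : ℕ}

@[reducible] def dotN (ω : Fin s → Bool) (h : Fin s → Z) : Z := ∑ j, if ω j then h j else 0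

@[reducible] def dotD (i : Fin s) (ω : Fin s → Bool) (h : Fin s → Z) : Z :=
  ∑ j, if ω j = true ∧ j ≠ i then h j else 0

lemma dotD_update_h (i : Fin s) (ω : Fin s → Bool) (h : Fin s → Z) (c : Z) :
    dotD i ω (Function.update h i c) = dotD i ω h := by
  refine Finset.sum_congr rfl fun j _ => ?_
  by_cases hj : j = i
  · simp [hj]
  · simp [Function.update_of_ne hj]

lemma dotN_eq_dotD (i : Fin s) (ω : Fin s → Bool) (h : Fin s → Z) (hω : ω i = false) :
    dotN ω h = dotD i ω h := by
  refine Finset.sum_congr rfl fun j _ => ?_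
  by_cases hj : j = i
  · subst hj; simp [hω]
  · simp [hj]

lemma dotN_eq_true (i : Fin s) (ω : Fin s → Bool) (h : Fin s → Z) (hω : ω i = true) :
    dotN ω h = h i + dotD i ω h := by
  have : dotN ω h = ∑ j, ((if j = i then h j else 0) + (if ω j = true ∧ j ≠ i then h j else 0)) := by
    refine Finset.sum_congr rfl fun j _ => ?_
    by_cases hj : j = i
    · subst hj; simp [hω]
    · simp [hj]
  rw [this, Finset.sum_add_distrib, Finset.sum_ite_eq' univ i h]
  simp [dotD]

lemma dotN_update_false (i : Fin s) (ω : Fin s → Bool) (h : Fin s → Z) :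
    dotN (Function.update ω i false) h = dotD i ω h := by
  refine Finset.sum_congr rfl fun j _ => ?_
  by_cases hj : j = i
  · subst hj; simp
  · simp [Function.update_of_ne hj, hj]

lemma dotD_update_ω (i : Fin s) (ω : Fin s → Bool) (h : Fin s → Z) (b : Bool) :
    dotD i (Function.update ω i b) h = dotD i ω h := by
  refine Finset.sum_congr rfl fun j _ => ?_
  by_cases hj : j = i
  · simp [hj]
  · simp [Function.update_of_ne hj]

noncomputable def SS (F : (Fin s → Bool) → Z → ℝ) : ℝ :=
  ∑ x : Z, ∑ h : Fin s → Z, ∏ ω, F ω (x + dotN ω h)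

noncomputable def T0 (i : Fin s) (F : (Fin s → Bool) → Z → ℝ) (h : Fin s → Z) : ℝ :=
  ∑ x : Z, ∏ ω ∈ univ.filter (fun ω => ω i = false), F ω (x + dotN ω h)

noncomputable def T1 (i : Fin s) (F : (Fin s → Bool) → Z → ℝ) (h : Fin s → Z) : ℝ :=
  ∑ x : Z, ∏ ω ∈ univ.filter (fun ω => ω i = true), F ω (x + dotD i ω h)

def splitEquiv (i : Fin s) : (Z × Z × (Fin s → Z)) ≃ ((Fin s → Z) × Z × Z) where
  toFun p := (Function.update p.2.2 i p.1, p.2.1, p.2.1 + p.2.2 i)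
  invFun q := (q.1 i, q.2.1, Function.update q.1 i (q.2.2 - q.2.1))
  left_inv p := by
    obtain ⟨c, x, h⟩ := p
    simp [Function.update_idem, add_sub_cancel_left, Function.update_eq_self]
  right_inv q := by
    obtain ⟨h, x, y⟩ := q
    simp [Function.update_idem, Function.update_eq_self]

lemma split (i : Fin s) (F : (Fin s → Bool) → Z → ℝ) :
    (Fintype.card Z : ℝ) * SS F = ∑ h : Fin s → Z, T0 i F h * T1 i F h := by
  have lhs : (Fintype.card Z : ℝ) * SS F
      = ∑ p : Z × Z × (Fin s → Z), ∏ ω, F ω (p.2.1 + dotN ω p.2.2) := by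
    rw [Fintype.sum_prod_type]
    have : ∀ c : Z, (∑ q : Z × (Fin s → Z), ∏ ω, F ω (q.1 + dotN ω q.2)) = SS F := by
      intro c; rw [SS, Fintype.sum_prod_type]
    simp only [Fintype.sum_prod_type]
    rw [Finset.sum_const]
    simp [SS, Fintype.sum_prod_type, nsmul_eq_mul, Finset.card_univ]
  have rhs : (∑ h : Fin s → Z, T0 i F h * T1 i F h)
      = ∑ q : (Fin s → Z) × Z × Z,
          (∏ ω ∈ univ.filter (fun ω => ω i = false), F ω (q.2.1 + dotN ω q.1)) *
          (∏ ω ∈ univ.filter (fun ω => ω i = true), F ω (q.2.2 + dotD i ω q.1)) := by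
    rw [Fintype.sum_prod_type]
    refine Finset.sum_congr rfl fun h _ => ?_
    rw [T0, T1, Finset.sum_mul_sum, Fintype.sum_prod_type]
  rw [lhs, rhs]
  refine Fintype.sum_equiv (splitEquiv i) _ _ fun p => ?_
  obtain ⟨c, x, h⟩ := p
  show (∏ ω, F ω (x + dotN ω h)) = _
  simp only [splitEquiv, Equiv.coe_fn_mk]
  rw [← Finset.prod_filter_mul_prod_filter_not univ (fun ω => ω i = false)
        (fun ω => F ω (x + dotN ω h))]
  congr 1
  · refine Finset.prod_congr rfl fun ω hω => ?_
    rw [mem_filter] at hω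
    rw [dotN_eq_dotD i ω h hω.2, dotN_eq_dotD i ω (Function.update h i c) hω.2, dotD_update_h]
  · have hfe : univ.filter (fun ω : Fin s → Bool => ¬ ω i = false)
        = univ.filter (fun ω => ω i = true) := by ext ω; simp
    rw [hfe]
    refine Finset.prod_congr rfl fun ω hω => ?_
    rw [mem_filter] at hω
    rw [dotN_eq_true i ω h hω.2, dotD_update_h, ← add_assoc]


noncomputable def GA (F : (Fin s → Bool) → Z → ℝ) : ℝ :=
  avg (Z × (Fin s → Z)) fun xh =>
    ∏ ω : Fin s → Bool, F ω (xh.1 + ∑ i, if ω i then xh.2 i else 0)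

lemma update_false_eq_self {ω : Fin s → Bool} {i : Fin s} (hω : ω i = false) :
    Function.update ω i false = ω := by
  conv_lhs => rw [← hω]
  exact Function.update_eq_self i ω

lemma update_true_eq_self {ω : Fin s → Bool} {i : Fin s} (hω : ω i = true) :
    Function.update ω i true = ω := by
  conv_lhs => rw [← hω]
  exact Function.update_eq_self i ω

lemma T0_F0 (i : Fin s) (F : (Fin s → Bool) → Z → ℝ) (h : Fin s → Z) :
    T0 i (fun ω => F (Function.update ω i false)) h = T0 i F h := by
  refine Finset.sum_congr rfl fun x _ => Finset.prod_congr rfl fun ω hω => ?_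
  rw [mem_filter] at hω
  simp only [update_false_eq_self hω.2]

lemma T1_F1 (i : Fin s) (F : (Fin s → Bool) → Z → ℝ) (h : Fin s → Z) :
    T1 i (fun ω => F (Function.update ω i true)) h = T1 i F h := by
  refine Finset.sum_congr rfl fun x _ => Finset.prod_congr rfl fun ω hω => ?_
  rw [mem_filter] at hω
  simp only [update_true_eq_self hω.2]

lemma T1_F0 (i : Fin s) (F : (Fin s → Bool) → Z → ℝ) (h : Fin s → Z) :
    T1 i (fun ω => F (Function.update ω i false)) h = T0 i F h := by
  refine Finset.sum_congr rfl fun x _ => ?_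
  refine Finset.prod_nbij' (fun ω => Function.update ω i false)
    (fun ω => Function.update ω i true) ?_ ?_ ?_ ?_ ?_
  · intro ω hω; simp
  · intro ω hω; simp
  · intro ω hω; rw [mem_filter] at hω
    simp only [Function.update_idem, update_true_eq_self hω.2]
  · intro ω hω; rw [mem_filter] at hω
    simp only [Function.update_idem, update_false_eq_self hω.2]
  · intro ω hω
    rw [dotN_update_false]

lemma T0_F1 (i : Fin s) (F : (Fin s → Bool) → Z → ℝ) (h : Fin s → Z) :
    T0 i (fun ω => F (Function.update ω i true)) h = T1 i F h := by
  refine Finset.sum_congr rfl fun x _ => ?_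
  refine Finset.prod_nbij' (fun ω => Function.update ω i true)
    (fun ω => Function.update ω i false) ?_ ?_ ?_ ?_ ?_
  · intro ω hω; simp
  · intro ω hω; simp
  · intro ω hω; rw [mem_filter] at hω
    simp only [Function.update_idem, update_false_eq_self hω.2]
  · intro ω hω; rw [mem_filter] at hω
    simp only [Function.update_idem, update_true_eq_self hω.2]
  · intro ω hω
    rw [mem_filter] at hω
    rw [dotN_eq_dotD i ω h hω.2, ← dotD_update_ω i ω h true]

lemma split0 (i : Fin s) (F : (Fin s → Bool) → Z → ℝ) :
    (Fintype.card Z : ℝ) * SS (fun ω => F (Function.update ω i false))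
      = ∑ h : Fin s → Z, T0 i F h ^ 2 := by
  rw [split i]
  exact Finset.sum_congr rfl fun h _ => by rw [T0_F0, T1_F0, sq]

lemma split1 (i : Fin s) (F : (Fin s → Bool) → Z → ℝ) :
    (Fintype.card Z : ℝ) * SS (fun ω => F (Function.update ω i true))
      = ∑ h : Fin s → Z, T1 i F h ^ 2 := by
  rw [split i]
  exact Finset.sum_congr rfl fun h _ => by rw [T0_F1, T1_F1, sq]

lemma GA_eq (F : (Fin s → Bool) → Z → ℝ) :
    GA F = SS F / ((Fintype.card Z : ℝ) * (Fintype.card Z : ℝ) ^ s) := by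
  rw [GA, avg]
  congr 1
  · rw [Fintype.sum_prod_type]
    rfl
  · rw [Fintype.card_prod, Fintype.card_fun, Fintype.card_fin]
    push_cast
    ring

lemma SS0_nonneg (i : Fin s) (F : (Fin s → Bool) → Z → ℝ) :
    0 ≤ SS (fun ω => F (Function.update ω i false)) := by
  rcases isEmpty_or_nonempty Z with hZ | hZ
  · rw [SS, Finset.univ_eq_empty, Finset.sum_empty]
  · have h1 := split0 i F
    have h2 : (0:ℝ) ≤ ∑ h : Fin s → Z, T0 i F h ^ 2 :=
      Finset.sum_nonneg fun _ _ => sq_nonneg _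
    have hN : (0:ℝ) < (Fintype.card Z : ℝ) := by exact_mod_cast Fintype.card_pos
    nlinarith [h1, h2, hN]

lemma SS1_nonneg (i : Fin s) (F : (Fin s → Bool) → Z → ℝ) :
    0 ≤ SS (fun ω => F (Function.update ω i true)) := by
  rcases isEmpty_or_nonempty Z with hZ | hZ
  · rw [SS, Finset.univ_eq_empty, Finset.sum_empty]
  · have h1 := split1 i F
    have h2 : (0:ℝ) ≤ ∑ h : Fin s → Z, T1 i F h ^ 2 :=
      Finset.sum_nonneg fun _ _ => sq_nonneg _
    have hN : (0:ℝ) < (Fintype.card Z : ℝ) := by exact_mod_cast Fintype.card_pos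
    nlinarith [h1, h2, hN]

lemma GA0_nonneg (i : Fin s) (F : (Fin s → Bool) → Z → ℝ) :
    0 ≤ GA (fun ω => F (Function.update ω i false)) := by
  rw [GA_eq]
  exact div_nonneg (SS0_nonneg i F) (by positivity)

lemma GA_sq_le (i : Fin s) (F : (Fin s → Bool) → Z → ℝ) :
    GA F ^ 2 ≤ GA (fun ω => F (Function.update ω i false))
      * GA (fun ω => F (Function.update ω i true)) := by
  rcases isEmpty_or_nonempty Z with hZ | hZ
  · have hz : ∀ G : (Fin s → Bool) → Z → ℝ, SS G = 0 := fun G => by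
      rw [SS, Finset.univ_eq_empty, Finset.sum_empty]
    rw [GA_eq, GA_eq, GA_eq, hz, hz, hz]
    simp
  · have hN : (0:ℝ) < (Fintype.card Z : ℝ) := by exact_mod_cast Fintype.card_pos
    have cs := Finset.sum_mul_sq_le_sq_mul_sq univ (T0 i F) (T1 i F)
    rw [← split i F, ← split0 i F, ← split1 i F] at cs
    have key : SS F ^ 2 ≤ SS (fun ω => F (Function.update ω i false))
        * SS (fun ω => F (Function.update ω i true)) := by
      nlinarith [cs, hN, mul_pos hN hN]
    rw [GA_eq, GA_eq, GA_eq, div_pow, div_mul_div_comm]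
    have hD : (0:ℝ) < ((Fintype.card Z : ℝ) * (Fintype.card Z : ℝ) ^ s) ^ 2 := by positivity
    rw [show ((Fintype.card Z : ℝ) * (Fintype.card Z : ℝ) ^ s)
        * ((Fintype.card Z : ℝ) * (Fintype.card Z : ℝ) ^ s)
        = ((Fintype.card Z : ℝ) * (Fintype.card Z : ℝ) ^ s) ^ 2 from (sq _).symm]
    exact div_le_div_of_nonneg_right key hD.le
lemma claim (f : (Fin s → Bool) → Z → ℝ) (S : Finset (Fin s)) :
    GA f ^ (2 ^ s) ≤
      ∏ ε : Fin s → Bool, GA (fun ω => f (fun j => if j ∈ S then ε j else ω j)) := by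
  induction S using Finset.induction_on with
  | empty =>
    have he : ∀ ε : Fin s → Bool,
        (fun ω => f (fun j => if j ∈ (∅ : Finset (Fin s)) then ε j else ω j)) = f := by
      intro ε; funext ω; simp
    rw [Finset.prod_congr rfl fun ε _ => congrArg GA (he ε), Finset.prod_const,
      Finset.card_univ, Fintype.card_fun, Fintype.card_fin, Fintype.card_bool]
  | @insert i S hi IH =>
    refine IH.trans ?_
    set g : (Fin s → Bool) → (Fin s → Bool) → Z → ℝ :=
      fun ε ω => f (fun j => if j ∈ S then ε j else ω j) with hg
    set g' : (Fin s → Bool) → (Fin s → Bool) → Z → ℝ :=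
      fun ε ω => f (fun j => if j ∈ insert i S then ε j else ω j) with hg'
    have hsplit : ∀ a : (Fin s → Bool) → ℝ, (∏ ε : Fin s → Bool, a ε)
        = (∏ ε ∈ univ.filter (fun ε => ε i = false), a ε)
          * ∏ ε ∈ univ.filter (fun ε => ε i = true), a ε := by
      intro a
      rw [← Finset.prod_filter_mul_prod_filter_not univ (fun ε => ε i = false) a]
      congr 1
      exact Finset.prod_congr (by ext ε; simp) fun _ _ => rfl
    have hre : ∀ a : (Fin s → Bool) → ℝ,
        (∏ ε ∈ univ.filter (fun ε => ε i = true), a ε)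
        = ∏ ε ∈ univ.filter (fun ε => ε i = false), a (Function.update ε i true) := by
      intro a
      refine Finset.prod_nbij' (fun ε => Function.update ε i false)
        (fun ε => Function.update ε i true) ?_ ?_ ?_ ?_ ?_
      · intro ε hε; simp
      · intro ε hε; simp
      · intro ε hε; rw [mem_filter] at hε
        simp only [Function.update_idem, update_true_eq_self hε.2]
      · intro ε hε; rw [mem_filter] at hε
        simp only [Function.update_idem, update_false_eq_self hε.2]
      · intro ε hε; rw [mem_filter] at hε
        simp only [Function.update_idem, update_true_eq_self hε.2]
    have hgi : ∀ ε : Fin s → Bool, g (Function.update ε i true) = g ε := by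
      intro ε; funext ω
      simp only [hg]
      refine congrArg f (funext fun j => ?_)
      by_cases hj : j ∈ S
      · have hji : j ≠ i := fun h => hi (h ▸ hj)
        rw [if_pos hj, if_pos hj, Function.update_of_ne hji]
      · rw [if_neg hj, if_neg hj]
    calc (∏ ε : Fin s → Bool, GA (g ε))
        = ∏ ε ∈ univ.filter (fun ε => ε i = false), (GA (g ε) * GA (g ε)) := by
          rw [hsplit (fun ε => GA (g ε)), hre (fun ε => GA (g ε))]
          rw [← Finset.prod_mul_distrib]
          exact Finset.prod_congr rfl fun ε _ => by rw [hgi ε]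
      _ ≤ ∏ ε ∈ univ.filter (fun ε => ε i = false),
            (GA (g' ε) * GA (g' (Function.update ε i true))) := by
          refine Finset.prod_le_prod (fun ε _ => mul_self_nonneg _) fun ε hε => ?_
          rw [mem_filter] at hε
          have h0 : (fun ω => (g ε) (Function.update ω i false)) = g' ε := by
            funext ω
            simp only [hg, hg']
            refine congrArg f (funext fun j => ?_)
            by_cases hj : j ∈ S
            · have hji : j ≠ i := fun h => hi (h ▸ hj)
              rw [if_pos hj, if_pos (Finset.mem_insert_of_mem hj)]
            · by_cases hji : j = i
              · subst hji
                rw [if_neg hj, if_pos (Finset.mem_insert_self j S),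
                  Function.update_self, hε.2]
              · rw [if_neg hj, if_neg (by simp [hji, hj]), Function.update_of_ne hji]
          have h1 : (fun ω => (g ε) (Function.update ω i true))
              = g' (Function.update ε i true) := by
            funext ω
            simp only [hg, hg']
            refine congrArg f (funext fun j => ?_)
            by_cases hj : j ∈ S
            · have hji : j ≠ i := fun h => hi (h ▸ hj)
              rw [if_pos hj, if_pos (Finset.mem_insert_of_mem hj),
                Function.update_of_ne hji]
            · by_cases hji : j = i
              · subst hji
                rw [if_neg hj, if_pos (Finset.mem_insert_self j S)]
                simp
              · rw [if_neg hj, if_neg (by simp [hji, hj]), Function.update_of_ne hji]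
          calc GA (g ε) * GA (g ε) = GA (g ε) ^ 2 := (sq _).symm
            _ ≤ GA (fun ω => (g ε) (Function.update ω i false))
                * GA (fun ω => (g ε) (Function.update ω i true)) := GA_sq_le i (g ε)
            _ = GA (g' ε) * GA (g' (Function.update ε i true)) := by rw [h0, h1]
      _ = ∏ ε : Fin s → Bool, GA (g' ε) := by
          rw [Finset.prod_mul_distrib, ← hre (fun ε => GA (g' ε)),
            ← hsplit (fun ε => GA (g' ε))]

end GCS15

/-- The Gowers–Cauchy–Schwarz inequality for the Gowers uniformity norms. -/
theorem stmt15 (Z : Type) [AddCommGroup Z] [Fintype Z] (s : ℕ) (hs : 2 ≤ s)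
    (f : (Fin s → Bool) → Z → ℝ) :
    |avg (Z × (Fin s → Z)) fun xh =>
        ∏ ω : Fin s → Bool, f ω (xh.1 + ∑ i, if ω i then xh.2 i else 0)|
      ≤ ∏ ω : Fin s → Bool, gowersNorm Z s (f ω) := by
  show |GCS15.GA f| ≤ _
  have i0 : Fin s := ⟨0, by omega⟩
  have hnn : ∀ ε : Fin s → Bool, 0 ≤ GCS15.GA (fun _ : Fin s → Bool => f ε) := fun ε =>
    GCS15.GA0_nonneg i0 (fun _ : Fin s → Bool => f ε)
  have h1 : GCS15.GA f ^ (2 ^ s) ≤ ∏ ε : Fin s → Bool, GCS15.GA (fun _ : Fin s → Bool => f ε) := by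
    refine (GCS15.claim f Finset.univ).trans_eq ?_
    exact Finset.prod_congr rfl fun ε _ =>
      congrArg GCS15.GA (funext fun ω => by simp)
  have habs : |GCS15.GA f| ^ (2 ^ s) ≤ ∏ ε : Fin s → Bool, GCS15.GA (fun _ : Fin s → Bool => f ε) := by
    rwa [Even.pow_abs (Nat.even_pow.mpr ⟨even_two, by omega⟩)]
  have hcast : (((2 ^ s : ℕ) : ℝ)) = (2 : ℝ) ^ s := by push_cast; ring
  have hgow : ∀ ε : Fin s → Bool,
      gowersNorm Z s (f ε) = GCS15.GA (fun _ : Fin s → Bool => f ε) ^ (((2 ^ s : ℕ) : ℝ))⁻¹ := by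
    intro ε
    rw [hcast]
    rfl
  calc |GCS15.GA f|
      = (|GCS15.GA f| ^ (2 ^ s : ℕ)) ^ (((2 ^ s : ℕ) : ℝ))⁻¹ :=
        (Real.pow_rpow_inv_natCast (abs_nonneg _) (by positivity)).symm
    _ ≤ (∏ ε : Fin s → Bool, GCS15.GA (fun _ : Fin s → Bool => f ε)) ^ (((2 ^ s : ℕ) : ℝ))⁻¹ :=
        Real.rpow_le_rpow (by positivity) habs (by positivity)
    _ = ∏ ε : Fin s → Bool, GCS15.GA (fun _ : Fin s → Bool => f ε) ^ (((2 ^ s : ℕ) : ℝ))⁻¹ :=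
        (Real.finset_prod_rpow _ _ (fun ε _ => hnn ε) _).symm
    _ = ∏ ε : Fin s → Bool, gowersNorm Z s (f ε) :=
        Finset.prod_congr rfl fun ε _ => (hgow ε).symm
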